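/- arXiv:2603.09433 — 2 statements merged into one kernel-verified Lean document; each statement's English description precedes it below -/
import Mathlib

section
/- Let L₁ and L₂ be strongly connected monogamous acyclic Σ-hypergraphs, and let S be a quotient of L₁ + L₂ obtained by a gluing scheme. If an output node A of L₁ is glued to an input node B of L₂, and additionally some input node X of L₁ is glued to some output node Y of L₂, then S contains a cycle (hence does not yield a pre-critical pair, whose source must be acyclic). -/
structure MAHypergraph (σ : Type) : Type 1 where
  V : Type
  E : Type
  s : E → List V
  t : E → List V
  l : E → σ

namespace MAHypergraph
variable {σ : Type}

structure Hom (G H : MAHypergraph σ) : Type where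
  fV : G.V → H.V
  fE : G.E → H.E
  src : ∀ e, (G.s e).map fV = H.s (fE e)
  tgt : ∀ e, (G.t e).map fV = H.t (fE e)
  lbl : ∀ e, G.l e = H.l (fE e)

def Hom.comp {G H K : MAHypergraph σ} (f : Hom G H) (g : Hom H K) : Hom G K where
  fV := fun v => g.fV (f.fV v)
  fE := fun e => g.fE (f.fE e)
  src := fun e => by
    have : (G.s e).map (fun v => g.fV (f.fV v)) = ((G.s e).map f.fV).map g.fV := by
      simp [List.map_map, Function.comp]
    rw [this, f.src, g.src]
  tgt := fun e => by
    have : (G.t e).map (fun v => g.fV (f.fV v)) = ((G.t e).map f.fV).map g.fV := by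
      simp [List.map_map, Function.comp]
    rw [this, f.tgt, g.tgt]
  lbl := fun e => by rw [f.lbl, g.lbl]

def Adj (G : MAHypergraph σ) (e e' : G.E) : Prop := ∃ v, v ∈ G.t e ∧ v ∈ G.s e'

def IsPath (G : MAHypergraph σ) (p : List G.E) : Prop := p ≠ [] ∧ p.Chain' G.Adj

def PathFrom (G : MAHypergraph σ) (v w : G.V) (p : List G.E) : Prop :=
  G.IsPath p ∧ (∃ e, p.head? = some e ∧ v ∈ G.s e) ∧ (∃ e, p.getLast? = some e ∧ w ∈ G.t e)

def IsCycle (G : MAHypergraph σ) (p : List G.E) : Prop :=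
  G.IsPath p ∧ ∃ v e e', p.head? = some e ∧ p.getLast? = some e' ∧ v ∈ G.s e ∧ v ∈ G.t e'

def Acyclic (G : MAHypergraph σ) : Prop := ∀ p, ¬ G.IsCycle p

def Monogamous (G : MAHypergraph σ) : Prop :=
  (∀ (v : G.V) (e e' : G.E) (i i' : ℕ),
      (G.t e)[i]? = some v → (G.t e')[i']? = some v → e = e' ∧ i = i') ∧
  (∀ (v : G.V) (e e' : G.E) (i i' : ℕ),
      (G.s e)[i]? = some v → (G.s e')[i']? = some v → e = e' ∧ i = i')

def IsInput (G : MAHypergraph σ) (v : G.V) : Prop := ∀ e, v ∉ G.t e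
def IsOutput (G : MAHypergraph σ) (v : G.V) : Prop := ∀ e, v ∉ G.s e

def StronglyConnected (G : MAHypergraph σ) : Prop :=
  ∀ x, G.IsInput x → ∀ y, G.IsOutput y → ∃ p, G.PathFrom x y p

def coprod (G H : MAHypergraph σ) : MAHypergraph σ where
  V := G.V ⊕ H.V
  E := G.E ⊕ H.E
  s := Sum.elim (fun e => (G.s e).map Sum.inl) (fun e => (H.s e).map Sum.inr)
  t := Sum.elim (fun e => (G.t e).map Sum.inl) (fun e => (H.t e).map Sum.inr)
  l := Sum.elim G.l H.l

def inlHom (G H : MAHypergraph σ) : Hom G (coprod G H) :=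
  ⟨Sum.inl, Sum.inl, fun _ => rfl, fun _ => rfl, fun _ => rfl⟩

def inrHom (G H : MAHypergraph σ) : Hom H (coprod G H) :=
  ⟨Sum.inr, Sum.inr, fun _ => rfl, fun _ => rfl, fun _ => rfl⟩

instance : CategoryTheory.Category (MAHypergraph σ) where
  Hom := Hom
  id G := ⟨fun v => v, fun e => e, fun e => by simp, fun e => by simp, fun _ => rfl⟩
  comp f g := f.comp g
  id_comp f := rfl
  comp_id f := rfl
  assoc f g h := rfl

end MAHypergraph



namespace MAHypergraph
variable {σ : Type} {G H : MAHypergraph σ}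

lemma Hom.mem_s (f : Hom G H) {v e} (h : v ∈ G.s e) : f.fV v ∈ H.s (f.fE e) := by
  rw [← f.src]; exact List.mem_map_of_mem h

lemma Hom.mem_t (f : Hom G H) {v e} (h : v ∈ G.t e) : f.fV v ∈ H.t (f.fE e) := by
  rw [← f.tgt]; exact List.mem_map_of_mem h

lemma Hom.adj (f : Hom G H) {e e'} (h : G.Adj e e') : H.Adj (f.fE e) (f.fE e') := by
  obtain ⟨v, h1, h2⟩ := h
  exact ⟨f.fV v, f.mem_t h1, f.mem_s h2⟩

end MAHypergraph

/-- If in a quotient S of the coproduct of two strongly connected ma-hypergraphs,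
an output A of the first is glued to an input B of the second, and an input X of
the first is glued to an output Y of the second, then S contains a cycle. -/
theorem Hypergraph.opposite_io_gluings_create_cycle {σ : Type} {L₁ L₂ S : MAHypergraph σ}
    (h₁m : L₁.Monogamous) (h₁a : L₁.Acyclic) (h₁c : L₁.StronglyConnected)
    (h₂m : L₂.Monogamous) (h₂a : L₂.Acyclic) (h₂c : L₂.StronglyConnected)
    (ε : MAHypergraph.Hom (MAHypergraph.coprod L₁ L₂) S)
    (hsurjV : Function.Surjective ε.fV) (hsurjE : Function.Surjective ε.fE)
    (A : L₁.V) (hA : L₁.IsOutput A) (B : L₂.V) (hB : L₂.IsInput B)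
    (X : L₁.V) (hX : L₁.IsInput X) (Y : L₂.V) (hY : L₂.IsOutput Y)
    (hAB : ε.fV (Sum.inl A) = ε.fV (Sum.inr B))
    (hXY : ε.fV (Sum.inl X) = ε.fV (Sum.inr Y)) :
    ∃ c, S.IsCycle c := by
  obtain ⟨p₁, ⟨hne₁, hch₁⟩, ⟨e₁, he₁, hXe⟩, ⟨e₂, he₂, hAe⟩⟩ := h₁c X hX A hA
  obtain ⟨p₂, ⟨hne₂, hch₂⟩, ⟨e₃, he₃, hBe⟩, ⟨e₄, he₄, hYe⟩⟩ := h₂c B hB Y hY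
  let f₁ : MAHypergraph.Hom L₁ S := (MAHypergraph.inlHom L₁ L₂).comp ε
  let f₂ : MAHypergraph.Hom L₂ S := (MAHypergraph.inrHom L₁ L₂).comp ε
  refine ⟨p₁.map f₁.fE ++ p₂.map f₂.fE, ⟨?_, ?_⟩,
    ε.fV (Sum.inl X), f₁.fE e₁, f₂.fE e₄, ?_, ?_, ?_, ?_⟩
  · simp [hne₁]
  · rw [List.Chain', List.isChain_append]
    refine ⟨(List.isChain_map _).mpr (hch₁.imp fun a b => f₁.adj),
      (List.isChain_map _).mpr (hch₂.imp fun a b => f₂.adj), ?_⟩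
    intro x hx y hy
    rw [List.getLast?_map, he₂, Option.map_some] at hx
    rw [List.head?_map, he₃, Option.map_some] at hy
    cases hx; cases hy
    exact ⟨ε.fV (Sum.inl A), f₁.mem_t hAe, by rw [hAB]; exact f₂.mem_s hBe⟩
  · rw [List.head?_append_of_ne_nil, List.head?_map, he₁, Option.map_some]
    simp [hne₁]
  · rw [List.getLast?_append_of_ne_nil, List.getLast?_map, he₄, Option.map_some]
    simp [hne₂]
  · exact f₁.mem_s hXe
  · rw [hXY]; exact f₂.mem_t hYe
end

section
/- If a gluing scheme glues two distinct nodes that both come from L₁ (i.e., both in the first summand of L₁ + L₂), then the composite of the first coprojection ι₁ : L₁ → L₁ + L₂ with the coequalizer map ε : L₁ + L₂ → coeq is not a monomorphism; hence the gluing scheme does not yield a pre-critical pair. -/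
structure SHypergraph (σ : Type) : Type 1 where
  V : Type
  E : Type
  s : E → List V
  t : E → List V
  l : E → σ

namespace SHypergraph
variable {σ : Type}

structure Hom (G H : SHypergraph σ) : Type where
  fV : G.V → H.V
  fE : G.E → H.E
  src : ∀ e, (G.s e).map fV = H.s (fE e)
  tgt : ∀ e, (G.t e).map fV = H.t (fE e)
  lbl : ∀ e, G.l e = H.l (fE e)

def Hom.comp {G H K : SHypergraph σ} (f : Hom G H) (g : Hom H K) : Hom G K where
  fV := fun v => g.fV (f.fV v)
  fE := fun e => g.fE (f.fE e)
  src := fun e => by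
    have : (G.s e).map (fun v => g.fV (f.fV v)) = ((G.s e).map f.fV).map g.fV := by
      simp [List.map_map, Function.comp]
    rw [this, f.src, g.src]
  tgt := fun e => by
    have : (G.t e).map (fun v => g.fV (f.fV v)) = ((G.t e).map f.fV).map g.fV := by
      simp [List.map_map, Function.comp]
    rw [this, f.tgt, g.tgt]
  lbl := fun e => by rw [f.lbl, g.lbl]

def Adj (G : SHypergraph σ) (e e' : G.E) : Prop := ∃ v, v ∈ G.t e ∧ v ∈ G.s e'

def IsPath (G : SHypergraph σ) (p : List G.E) : Prop := p ≠ [] ∧ p.Chain' G.Adj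

def PathFrom (G : SHypergraph σ) (v w : G.V) (p : List G.E) : Prop :=
  G.IsPath p ∧ (∃ e, p.head? = some e ∧ v ∈ G.s e) ∧ (∃ e, p.getLast? = some e ∧ w ∈ G.t e)

def IsCycle (G : SHypergraph σ) (p : List G.E) : Prop :=
  G.IsPath p ∧ ∃ v e e', p.head? = some e ∧ p.getLast? = some e' ∧ v ∈ G.s e ∧ v ∈ G.t e'

def Acyclic (G : SHypergraph σ) : Prop := ∀ p, ¬ G.IsCycle p

def Monogamous (G : SHypergraph σ) : Prop :=
  (∀ (v : G.V) (e e' : G.E) (i i' : ℕ),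
      (G.t e)[i]? = some v → (G.t e')[i']? = some v → e = e' ∧ i = i') ∧
  (∀ (v : G.V) (e e' : G.E) (i i' : ℕ),
      (G.s e)[i]? = some v → (G.s e')[i']? = some v → e = e' ∧ i = i')

def IsInput (G : SHypergraph σ) (v : G.V) : Prop := ∀ e, v ∉ G.t e
def IsOutput (G : SHypergraph σ) (v : G.V) : Prop := ∀ e, v ∉ G.s e

def StronglyConnected (G : SHypergraph σ) : Prop :=
  ∀ x, G.IsInput x → ∀ y, G.IsOutput y → ∃ p, G.PathFrom x y p

def coprod (G H : SHypergraph σ) : SHypergraph σ where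
  V := G.V ⊕ H.V
  E := G.E ⊕ H.E
  s := Sum.elim (fun e => (G.s e).map Sum.inl) (fun e => (H.s e).map Sum.inr)
  t := Sum.elim (fun e => (G.t e).map Sum.inl) (fun e => (H.t e).map Sum.inr)
  l := Sum.elim G.l H.l

def inlHom (G H : SHypergraph σ) : Hom G (coprod G H) :=
  ⟨Sum.inl, Sum.inl, fun _ => rfl, fun _ => rfl, fun _ => rfl⟩

def inrHom (G H : SHypergraph σ) : Hom H (coprod G H) :=
  ⟨Sum.inr, Sum.inr, fun _ => rfl, fun _ => rfl, fun _ => rfl⟩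

instance : CategoryTheory.Category (SHypergraph σ) where
  Hom := Hom
  id G := ⟨fun v => v, fun e => e, fun e => by simp, fun e => by simp, fun _ => rfl⟩
  comp f g := f.comp g
  id_comp f := rfl
  comp_id f := rfl
  assoc f g h := rfl

end SHypergraph


private theorem Hypergraph.hom_ext {σ : Type} {G H : SHypergraph σ} {f g : SHypergraph.Hom G H}
    (hV : f.fV = g.fV) (hE : f.fE = g.fE) : f = g := by
  cases f; cases g; cases hV; cases hE; rfl

open CategoryTheory in
/-- If a gluing scheme glues two distinct nodes both coming from L₁, then the
composite of the first coprojection with the coequalizer map is not a monomorphism. -/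
theorem Hypergraph.glue_within_summand_not_mono {σ : Type}
    {L₁ L₂ G S : SHypergraph σ}
    (g₁ g₂ : G ⟶ SHypergraph.coprod L₁ L₂) (ε : SHypergraph.coprod L₁ L₂ ⟶ S)
    (hcoeq : g₁ ≫ ε = g₂ ≫ ε)
    (x x' : L₁.V) (hne : x ≠ x') (y : G.V)
    (hy₁ : SHypergraph.Hom.fV g₁ y = Sum.inl x)
    (hy₂ : SHypergraph.Hom.fV g₂ y = Sum.inl x') :
    ¬ Mono (SHypergraph.inlHom L₁ L₂ ≫ ε) := by
  intro hmono
  -- ε identifies inl x and inl x'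
  have hε : ε.fV (Sum.inl x) = ε.fV (Sum.inl x') := by
    have := congrArg SHypergraph.Hom.fV hcoeq
    have := congrFun this y
    simpa [CategoryTheory.CategoryStruct.comp, SHypergraph.Hom.comp, hy₁, hy₂] using this
  -- point hypergraph
  let P : SHypergraph σ := ⟨PUnit, PEmpty, fun e => e.elim, fun e => e.elim, fun e => e.elim⟩
  let a : P ⟶ L₁ := ⟨fun _ => x, fun e => e.elim, fun e => e.elim, fun e => e.elim, fun e => e.elim⟩
  let b : P ⟶ L₁ := ⟨fun _ => x', fun e => e.elim, fun e => e.elim, fun e => e.elim, fun e => e.elim⟩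
  have hab : a ≫ (SHypergraph.inlHom L₁ L₂ ≫ ε) = b ≫ (SHypergraph.inlHom L₁ L₂ ≫ ε) := by
    apply hom_ext
    · funext v; exact hε
    · funext (e : PEmpty); exact e.elim
  have := hmono.right_cancellation a b hab
  have hx : x = x' := congrFun (congrArg SHypergraph.Hom.fV this) PUnit.unit
  exact hne hx
end
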